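/- Factor scaling: if U ∈ ℝ^{Y×d} has rows a_i·u for scalars a_i and a fixed vector u ≠ 0, then ‖U‖_s = (max_i |a_i|)·‖u‖₂, while ‖U‖_F = ‖U‖_* = ‖a‖₂·‖u‖₂. -/

import Mathlib

noncomputable def maxRowNorm {m n : ℕ} (M : Matrix (Fin m) (Fin n) ℝ) : ℝ :=
  ⨆ i : Fin m, Real.sqrt (∑ j, (M i j) ^ 2)

noncomputable def frobNorm {m n : ℕ} (M : Matrix (Fin m) (Fin n) ℝ) : ℝ :=
  Real.sqrt (∑ i, ∑ j, (M i j) ^ 2)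

noncomputable def sharedNorm {r c : ℕ} (U : Matrix (Fin r) (Fin c) ℝ) : ℝ :=
  sInf {x : ℝ | ∃ n : ℕ, ∃ A : Matrix (Fin r) (Fin n) ℝ,
    ∃ V : Matrix (Fin n) (Fin c) ℝ, A * V = U ∧ x = maxRowNorm A * frobNorm V}

noncomputable def nucNorm {r c : ℕ} (U : Matrix (Fin r) (Fin c) ℝ) : ℝ :=
  sInf {x : ℝ | ∃ n : ℕ, ∃ A : Matrix (Fin r) (Fin n) ℝ,
    ∃ V : Matrix (Fin n) (Fin c) ℝ, A * V = U ∧ x = frobNorm A * frobNorm V}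

lemma row_cs {n c : ℕ} (x : Fin n → ℝ) (V : Matrix (Fin n) (Fin c) ℝ) :
    ∑ j, (∑ k, x k * V k j) ^ 2 ≤ (∑ k, x k ^ 2) * (∑ k, ∑ j, V k j ^ 2) := by
  calc ∑ j, (∑ k, x k * V k j) ^ 2
      ≤ ∑ j, (∑ k, x k ^ 2) * (∑ k, V k j ^ 2) :=
        Finset.sum_le_sum fun j _ => Finset.sum_mul_sq_le_sq_mul_sq _ _ _
    _ = (∑ k, x k ^ 2) * (∑ k, ∑ j, V k j ^ 2) := by
        rw [← Finset.mul_sum, Finset.sum_comm]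

theorem stmt17 (Y d : ℕ) (hY : 0 < Y) (a : Fin Y → ℝ) (u : Fin d → ℝ)
    (hu : u ≠ 0) (U : Matrix (Fin Y) (Fin d) ℝ)
    (hU : ∀ i j, U i j = a i * u j) :
    sharedNorm U = (⨆ i : Fin Y, |a i|) * Real.sqrt (∑ j, (u j) ^ 2) ∧
      frobNorm U = Real.sqrt (∑ i, (a i) ^ 2) * Real.sqrt (∑ j, (u j) ^ 2) ∧
      nucNorm U = Real.sqrt (∑ i, (a i) ^ 2) * Real.sqrt (∑ j, (u j) ^ 2) := by
  haveI : Nonempty (Fin Y) := Fin.pos_iff_nonempty.mp hY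
  have hS2 : (0:ℝ) ≤ ∑ j, u j ^ 2 := Finset.sum_nonneg fun _ _ => sq_nonneg _
  have hsum : (∑ i, ∑ j, U i j ^ 2) = (∑ i, a i ^ 2) * (∑ j, u j ^ 2) := by
    simp only [hU, mul_pow, ← Finset.mul_sum, ← Finset.sum_mul]
  have hfrob : frobNorm U = Real.sqrt (∑ i, a i ^ 2) * Real.sqrt (∑ j, u j ^ 2) := by
    rw [frobNorm, hsum, Real.sqrt_mul (Finset.sum_nonneg fun _ _ => sq_nonneg _)]
  -- the candidate factorization with n = 1
  set A₁ : Matrix (Fin Y) (Fin 1) ℝ := Matrix.of fun i _ => a i with hA₁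
  set V₁ : Matrix (Fin 1) (Fin d) ℝ := Matrix.of fun _ j => u j with hV₁
  have hfac : A₁ * V₁ = U := by
    ext i j
    simp [Matrix.mul_apply, hU i j, hA₁, hV₁]
  have hmr : maxRowNorm A₁ = ⨆ i, |a i| := by
    unfold maxRowNorm
    congr 1; funext i
    simp [hA₁, Real.sqrt_sq_eq_abs]
  have hfV : frobNorm V₁ = Real.sqrt (∑ j, u j ^ 2) := by
    unfold frobNorm
    simp [hV₁]
  have hfA : frobNorm A₁ = Real.sqrt (∑ i, a i ^ 2) := by
    unfold frobNorm
    simp [hA₁]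
  -- the maximizer of |a i|
  obtain ⟨i0, hi0⟩ := Finite.exists_max fun i => |a i|
  have hM : (⨆ i, |a i|) = |a i0| :=
    le_antisymm (ciSup_le hi0) (le_ciSup (f := fun i => |a i|) (Set.Finite.bddAbove (Set.finite_range _)) i0)
  refine ⟨?_, hfrob, ?_⟩
  · -- sharedNorm
    apply le_antisymm
    · exact csInf_le ⟨0, fun x ⟨n, A, V, hAV, hx⟩ => by
        rw [hx]
        refine mul_nonneg ?_ (Real.sqrt_nonneg _)
        exact Real.iSup_nonneg fun i => Real.sqrt_nonneg _⟩
        ⟨1, A₁, V₁, hfac, by rw [hmr, hfV]⟩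
    · refine le_csInf ⟨_, 1, A₁, V₁, hfac, rfl⟩ ?_
      rintro x ⟨n, A, V, hAV, rfl⟩
      have key : (⨆ i, |a i|) * Real.sqrt (∑ j, u j ^ 2)
          ≤ Real.sqrt (∑ k, A i0 k ^ 2) * frobNorm V := by
        rw [hM, ← Real.sqrt_sq_eq_abs, ← Real.sqrt_mul (sq_nonneg _)]
        have h1 : a i0 ^ 2 * ∑ j, u j ^ 2 = ∑ j, (∑ k, A i0 k * V k j) ^ 2 := by
          have : ∀ j, (∑ k, A i0 k * V k j) = a i0 * u j := by
            intro j
            have := congrFun (congrFun hAV i0) j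
            rw [Matrix.mul_apply] at this
            rw [this, hU]
          simp only [this, mul_pow, ← Finset.mul_sum]
        rw [h1]
        rw [frobNorm, ← Real.sqrt_mul (Finset.sum_nonneg fun _ _ => sq_nonneg _)]
        exact Real.sqrt_le_sqrt (row_cs _ _)
      refine key.trans (mul_le_mul_of_nonneg_right ?_ (Real.sqrt_nonneg _))
      exact le_ciSup (f := fun i => Real.sqrt (∑ k, A i k ^ 2)) (Set.Finite.bddAbove (Set.finite_range _)) i0
  · -- nucNorm
    rw [← hfrob]
    apply le_antisymm
    · exact csInf_le ⟨0, fun x ⟨n, A, V, hAV, hx⟩ => by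
        rw [hx]; exact mul_nonneg (Real.sqrt_nonneg _) (Real.sqrt_nonneg _)⟩
        ⟨1, A₁, V₁, hfac, by rw [hfA, hfV, hfrob]⟩
    · refine le_csInf ⟨_, 1, A₁, V₁, hfac, rfl⟩ ?_
      rintro x ⟨n, A, V, hAV, rfl⟩
      rw [← hAV]
      unfold frobNorm
      rw [← Real.sqrt_mul (Finset.sum_nonneg fun _ _ => Finset.sum_nonneg fun _ _ => sq_nonneg (A _ _))]
      apply Real.sqrt_le_sqrt
      calc ∑ i, ∑ j, (A * V) i j ^ 2
          = ∑ i, ∑ j, (∑ k, A i k * V k j) ^ 2 := by simp [Matrix.mul_apply]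
        _ ≤ ∑ i, (∑ k, A i k ^ 2) * (∑ k, ∑ j, V k j ^ 2) :=
            Finset.sum_le_sum fun i _ => row_cs _ _
        _ = (∑ i, ∑ k, A i k ^ 2) * (∑ k, ∑ j, V k j ^ 2) := by
            rw [Finset.sum_mul]
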